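/- arXiv:1712.01601 — 2 statements merged into one kernel-verified Lean document; each statement's English description precedes it below -/
import Mathlib

section
/- Let λ_n be the ladder trees in the Connes–Kreimer Hopf algebra H of rooted forests over ℚ, with antipode S and grading operator Y (Y(f) = deg(f)·f where deg counts vertices). Define the Dynkin operator D = m∘(S ⊗ Y)∘Δ. Then for all n ≥ 1: D(λ_n) = n · Σ_{d=1}^{n} ((-1)^{d+1}/d) Σ_{m_1+⋯+m_d=n, m_i≥1} λ_{m_1}⋯λ_{m_d}. -/
open TensorProduct Finset

/-- Sum over compositions of `n` into `d` (ordered) positive parts of the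
products `λ_{m₁} ⋯ λ_{m_d}`. -/
def compSum {R : Type*} [Ring R] (a : ℕ → R) (n d : ℕ) : R :=
  ∑ c ∈ Finset.univ.filter (fun c : Composition n => c.length = d),
    (c.blocks.map a).prod

section Aux

set_option linter.unusedSectionVars false

variable {R : Type*} [CommRing R] [Algebra ℚ R] (a : ℕ → R)

lemma compSum_of_lt {n d : ℕ} (h : n < d) : compSum a n d = 0 :=
  Finset.sum_eq_zero fun c hc => by
    simp only [mem_filter] at hc
    exact absurd (hc.2 ▸ c.length_le) (by omega)

lemma comp_zero_blocks (c : Composition 0) : c.blocks = [] := by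
  rcases c with ⟨bl, hpos, hsum⟩
  cases bl with
  | nil => rfl
  | cons x xs =>
    exfalso
    have hx : 0 < x := hpos (by simp)
    simp [List.sum_cons] at hsum
    omega

lemma compSum_zero_zero : compSum a 0 0 = 1 := by
  classical
  rw [compSum]
  rw [show (Finset.univ.filter (fun c : Composition 0 => c.length = 0))
      = {(⟨[], fun h => absurd h (by simp), rfl⟩ : Composition 0)} from ?_]
  · simp
  · apply Finset.eq_singleton_iff_unique_mem.mpr
    refine ⟨Finset.mem_filter.mpr ⟨Finset.mem_univ _, rfl⟩, fun c _ => ?_⟩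
    exact Composition.ext (comp_zero_blocks c)

lemma compSum_zero_left {n : ℕ} (hn : 0 < n) : compSum a n 0 = 0 :=
  Finset.sum_eq_zero fun c hc => by
    simp only [mem_filter] at hc
    exfalso
    have hb : c.blocks = [] := List.length_eq_zero_iff.mp hc.2
    have := c.blocks_sum
    rw [hb] at this
    simp at this
    omega

/-- last block (0 if none) -/
def lastB {n : ℕ} (c : Composition n) : ℕ := c.blocks.getLast?.getD 0

/-- Weighted recursion by splitting off the last block. -/
lemma weighted_rec (w : ℕ → ℚ) {n : ℕ} (hn : 0 < n) (d : ℕ) :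
    ∑ c ∈ Finset.univ.filter (fun c : Composition n => c.length = d + 1),
      w (lastB c) • (c.blocks.map a).prod
    = ∑ j ∈ Finset.range n, w (n - j) • (compSum a j d * a (n - j)) := by
  classical
  have hfacts : ∀ c : Composition n, c.length = d + 1 →
      c.blocks ≠ [] ∧ 1 ≤ lastB c ∧ lastB c ≤ n ∧
      c.blocks.dropLast.sum + lastB c = n := by
    intro c hc
    have hne : c.blocks ≠ [] := by
      intro h; rw [Composition.length, h] at hc; simp at hc
    have hl : lastB c = c.blocks.getLast hne := by
      rw [lastB, List.getLast?_eq_getLast hne]; rfl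
    have hmem : c.blocks.getLast hne ∈ c.blocks := List.getLast_mem hne
    have hpos : 0 < lastB c := hl ▸ c.blocks_pos hmem
    have hsplit : c.blocks.dropLast ++ [c.blocks.getLast hne] = c.blocks :=
      List.dropLast_append_getLast hne
    have hsum : c.blocks.dropLast.sum + lastB c = n := by
      rw [hl]
      have := congrArg List.sum hsplit
      simpa [c.blocks_sum] using this
    exact ⟨hne, hpos, by omega, hsum⟩
  rw [← Finset.sum_fiberwise_of_maps_to
      (g := fun c : Composition n => n - lastB c) (t := Finset.range n)
      (fun c hc => by
        simp only [mem_filter] at hc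
        obtain ⟨-, h1, h2, -⟩ := hfacts c hc.2
        simp only [mem_range]; omega)]
  refine Finset.sum_congr rfl fun j hj => ?_
  simp only [mem_range] at hj
  rw [compSum, Finset.sum_mul, Finset.smul_sum]
  refine Finset.sum_bij'
    (i := fun c hc => (⟨c.blocks.dropLast,
        fun hi => c.blocks_pos (by apply List.dropLast_subset; exact hi),
        by
          simp only [mem_filter] at hc
          obtain ⟨-, h1, h2, h4⟩ := hfacts c hc.1.2
          omega⟩ : Composition j))
    (j := fun c' hc' => (⟨c'.blocks ++ [n - j],
        fun hi => by
          rcases List.mem_append.mp hi with h | h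
          · exact c'.blocks_pos h
          · simp at h; omega,
        by simp [c'.blocks_sum]; omega⟩ : Composition n))
    ?_ ?_ ?_ ?_ ?_
  · intro c hc
    simp only [mem_filter, mem_univ, true_and] at hc ⊢
    show (List.dropLast c.blocks).length = d
    rw [List.length_dropLast]
    have : c.blocks.length = d + 1 := hc.1
    omega
  · intro c' hc'
    simp only [mem_filter, mem_univ, true_and] at hc' ⊢
    refine ⟨?_, ?_⟩
    · show (c'.blocks ++ [n - j]).length = d + 1
      simp [List.length_append, hc']
    · show n - lastB (⟨c'.blocks ++ [n - j], _, _⟩ : Composition n) = j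
      simp only [lastB, List.getLast?_concat, Option.getD_some]
      omega
  · intro c hc
    simp only [mem_filter, mem_univ, true_and] at hc
    obtain ⟨hne, h1, h2, h4⟩ := hfacts c hc.1
    apply Composition.ext
    show c.blocks.dropLast ++ [n - j] = c.blocks
    have hlast : lastB c = n - j := by omega
    have hl : lastB c = c.blocks.getLast hne := by
      rw [lastB, List.getLast?_eq_getLast hne]; rfl
    rw [← hlast, hl]
    exact List.dropLast_append_getLast hne
  · intro c' hc'
    apply Composition.ext
    show (c'.blocks ++ [n - j]).dropLast = c'.blocks
    exact List.dropLast_concat ..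
  · intro c hc
    simp only [mem_filter, mem_univ, true_and] at hc
    obtain ⟨hne, h1, h2, h4⟩ := hfacts c hc.1
    have hlast : lastB c = n - j := by omega
    have hl : lastB c = c.blocks.getLast hne := by
      rw [lastB, List.getLast?_eq_getLast hne]; rfl
    have hsplit : c.blocks.dropLast ++ [c.blocks.getLast hne] = c.blocks :=
      List.dropLast_append_getLast hne
    have hprod : (c.blocks.map a).prod
        = ((c.blocks.dropLast.map a).prod) * a (n - j) := by
      conv_lhs => rw [← hsplit]
      rw [List.map_append, List.prod_append]
      simp [← hl, hlast]
    show w (lastB c) • (c.blocks.map a).prod = w (n - j) • ((c.blocks.dropLast.map a).prod * a (n - j))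
    rw [hprod, hlast]

lemma comp_rec {n : ℕ} (hn : 0 < n) (d : ℕ) :
    compSum a n (d + 1) = ∑ j ∈ Finset.range n, compSum a j d * a (n - j) := by
  have := weighted_rec a (fun _ => 1) hn d
  simpa [compSum] using this

lemma sum_getD (l : List ℕ) : ∑ k ∈ Finset.range l.length, l.getD k 0 = l.sum := by
  induction l with
  | nil => simp
  | cons x xs ih =>
    rw [List.length_cons, Finset.sum_range_succ']
    simp only [List.getD_cons_succ, List.getD_cons_zero]
    rw [ih, List.sum_cons, add_comm]

/-- Rotation invariance: each position contributes equally. -/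
lemma rotate_lemma {n d : ℕ} (hd : 0 < d) (k : ℕ) (hk : k < d) :
    ∑ c ∈ Finset.univ.filter (fun c : Composition n => c.length = d),
        ((c.blocks.getD k 0 : ℚ)) • (c.blocks.map a).prod
    = ∑ c ∈ Finset.univ.filter (fun c : Composition n => c.length = d),
        ((c.blocks.getD 0 0 : ℚ)) • (c.blocks.map a).prod := by
  classical
  refine Finset.sum_bij'
    (i := fun c _ => (⟨c.blocks.rotate k,
        fun hi => c.blocks_pos (List.mem_rotate.mp hi),
        by rw [(List.rotate_perm _ _).sum_eq, c.blocks_sum]⟩ : Composition n))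
    (j := fun c _ => (⟨c.blocks.rotate (d - k),
        fun hi => c.blocks_pos (List.mem_rotate.mp hi),
        by rw [(List.rotate_perm _ _).sum_eq, c.blocks_sum]⟩ : Composition n))
    ?_ ?_ ?_ ?_ ?_
  · intro c hc
    simp only [mem_filter, mem_univ, true_and] at hc ⊢
    show (c.blocks.rotate k).length = d
    simp only [List.length_rotate]
    exact hc
  · intro c hc
    simp only [mem_filter, mem_univ, true_and] at hc ⊢
    show (c.blocks.rotate (d - k)).length = d
    simp only [List.length_rotate]
    exact hc
  · intro c hc
    simp only [mem_filter, mem_univ, true_and] at hc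
    apply Composition.ext
    show (c.blocks.rotate k).rotate (d - k) = c.blocks
    rw [List.rotate_rotate]
    have h1 : k + (d - k) = d := by omega
    rw [h1, ← hc]
    exact List.rotate_length _
  · intro c hc
    simp only [mem_filter, mem_univ, true_and] at hc
    apply Composition.ext
    show (c.blocks.rotate (d - k)).rotate k = c.blocks
    rw [List.rotate_rotate]
    have h1 : d - k + k = d := by omega
    rw [h1, ← hc]
    exact List.rotate_length _
  · intro c hc
    simp only [mem_filter, mem_univ, true_and] at hc
    have hlen : c.blocks.length = d := hc
    have hlenrot : 0 < (c.blocks.rotate k).length := by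
      rw [List.length_rotate, hlen]; exact hd
    have hkd : k < c.blocks.length := by omega
    have hidx : (0 + k) % c.blocks.length = k := by
      rw [hlen, Nat.mod_eq_of_lt (by omega)]; omega
    have hget : (c.blocks.rotate k).getD 0 0 = c.blocks.getD k 0 := by
      rw [List.getD_eq_getElem _ _ hlenrot, List.getD_eq_getElem _ _ hkd,
        List.getElem_rotate]
      simp only [hidx]
    have hprod : ((c.blocks.rotate k).map a).prod = (c.blocks.map a).prod :=
      (((List.rotate_perm _ _)).map a).prod_eq
    show _ = ((((c.blocks.rotate k).getD 0 0 : ℕ) : ℚ)) • (((c.blocks.rotate k).map a).prod)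
    rw [hget, hprod]

/-- `d • T n d = n • compSum n d` where `T` weights each composition by its last block. -/
lemma rot_total {n d : ℕ} (hd : 0 < d) :
    (d : ℚ) • ∑ c ∈ Finset.univ.filter (fun c : Composition n => c.length = d),
        ((lastB c : ℚ)) • (c.blocks.map a).prod
    = (n : ℚ) • compSum a n d := by
  classical
  have hT : ∑ c ∈ Finset.univ.filter (fun c : Composition n => c.length = d),
        ((lastB c : ℚ)) • (c.blocks.map a).prod
      = ∑ c ∈ Finset.univ.filter (fun c : Composition n => c.length = d),
        ((c.blocks.getD (d-1) 0 : ℚ)) • (c.blocks.map a).prod := by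
    refine Finset.sum_congr rfl fun c hc => ?_
    simp only [mem_filter, mem_univ, true_and] at hc
    have hlen : c.blocks.length = d := hc
    have hne : c.blocks ≠ [] := by
      intro h; rw [h] at hlen; simp at hlen; omega
    congr 2
    rw [lastB, List.getLast?_eq_getLast hne, Option.getD_some,
      List.getLast_eq_getElem, List.getD_eq_getElem _ _ (by omega)]
    congr 1
    omega
  have hsum : ∀ k ∈ Finset.range d,
      (∑ c ∈ Finset.univ.filter (fun c : Composition n => c.length = d),
        ((c.blocks.getD k 0 : ℚ)) • (c.blocks.map a).prod)
      = ∑ c ∈ Finset.univ.filter (fun c : Composition n => c.length = d),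
        ((c.blocks.getD (d-1) 0 : ℚ)) • (c.blocks.map a).prod := by
    intro k hk
    simp only [mem_range] at hk
    rw [rotate_lemma a hd k hk, ← rotate_lemma a hd (d-1) (by omega)]
  have htot : ∑ k ∈ Finset.range d,
      (∑ c ∈ Finset.univ.filter (fun c : Composition n => c.length = d),
        ((c.blocks.getD k 0 : ℚ)) • (c.blocks.map a).prod)
      = (n : ℚ) • compSum a n d := by
    rw [Finset.sum_comm, compSum, Finset.smul_sum]
    refine Finset.sum_congr rfl fun c hc => ?_
    simp only [mem_filter, mem_univ, true_and] at hc
    rw [← Finset.sum_smul]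
    congr 1
    have hcast : ∑ k ∈ Finset.range d, ((c.blocks.getD k 0 : ℚ))
        = ((∑ k ∈ Finset.range d, c.blocks.getD k 0 : ℕ) : ℚ) := by
      push_cast; ring
    rw [hcast]
    have hlen : c.blocks.length = d := hc
    rw [← hlen, sum_getD, c.blocks_sum]
  rw [hT, ← htot, Finset.sum_congr rfl hsum, Finset.sum_const, card_range]
  rw [← Nat.cast_smul_eq_nsmul ℚ]

end Aux

/-- **Dynkin operator on ladder trees.**
Let `H` be the Connes–Kreimer Hopf algebra of rooted forests over `ℚ` (a
commutative Hopf algebra), `λₙ` the ladder trees with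
`Δ(λₙ) = ∑_{j=0}^n λⱼ ⊗ λ_{n-j}`, `S` the antipode, and `Y` the grading
operator (`Y(λⱼ) = j·λⱼ`).  With `D = m ∘ (S ⊗ Y) ∘ Δ` the Dynkin operator,
for all `n ≥ 1`:
`D(λₙ) = n · ∑_{d=1}^n ((-1)^{d+1}/d) ∑_{m₁+⋯+m_d=n, mᵢ≥1} λ_{m₁}⋯λ_{m_d}`. -/
theorem dynkin_ladder
    (H : Type*) [CommRing H] [HopfAlgebra ℚ H]
    (lam : ℕ → H) (hlam0 : lam 0 = 1)
    (hΔ : ∀ n : ℕ, Coalgebra.comul (lam n) =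
      ∑ j ∈ Finset.range (n + 1), lam j ⊗ₜ[ℚ] lam (n - j))
    (Y : H →ₗ[ℚ] H) (hY : ∀ j : ℕ, Y (lam j) = (j : ℚ) • lam j)
    (D : H → H)
    (hD : ∀ f : H, D f = LinearMap.mul' ℚ H
      ((TensorProduct.map (HopfAlgebra.antipode (R := ℚ)) Y) (Coalgebra.comul f)))
    (n : ℕ) (hn : 1 ≤ n) :
    D (lam n) = (n : ℚ) •
      ∑ d ∈ Finset.Icc 1 n, (((-1 : ℚ) ^ (d + 1)) / d) • compSum lam n d := by
  classical
  -- Step 1: the counit vanishes on `lam m` for `m ≥ 1`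
  have hcounit : ∀ m : ℕ, 1 ≤ m → Coalgebra.counit (R := ℚ) (lam m) = 0 := by
    intro m
    induction m using Nat.strong_induction_on with
    | _ m ih =>
      intro hm
      have h1 := Coalgebra.rTensor_counit_comul (R := ℚ) (lam m)
      rw [hΔ, map_sum] at h1
      have h2 := congrArg (TensorProduct.lid ℚ H).toLinearMap h1
      simp only [map_sum, LinearMap.rTensor_tmul, LinearEquiv.coe_coe,
        TensorProduct.lid_tmul] at h2
      rw [Finset.sum_range_succ'] at h2
      have h0 : Coalgebra.counit (R := ℚ) (lam 0) • lam (m - 0) = lam m := by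
        rw [hlam0]
        simp [Bialgebra.counit_one]
      rw [h0] at h2
      have h3 : ∑ j ∈ Finset.range m,
          Coalgebra.counit (R := ℚ) (lam (j+1)) • lam (m - (j+1)) = 0 := by
        have := congrArg (fun x => x - lam m) h2
        simpa using this
      obtain ⟨m', rfl⟩ : ∃ m', m = m' + 1 := ⟨m - 1, by omega⟩
      rw [Finset.sum_range_succ] at h3
      have h4 : ∑ j ∈ Finset.range m',
          Coalgebra.counit (R := ℚ) (lam (j+1)) • lam (m' + 1 - (j+1)) = 0 :=
        Finset.sum_eq_zero fun j hj => by
          simp only [mem_range] at hj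
          rw [ih (j+1) (by omega) (by omega), zero_smul]
      rw [h4, zero_add] at h3
      simp only [Nat.add_sub_cancel_left, Nat.sub_self, hlam0] at h3
      have h5 := congrArg (Coalgebra.counit (R := ℚ)) h3
      simpa [Bialgebra.counit_one] using h5
  set S : H →ₗ[ℚ] H := HopfAlgebra.antipode (R := ℚ) with hSdef
  -- Step 2: antipode convolution relation
  have hconv : ∀ m : ℕ, ∑ j ∈ Finset.range (m+1), S (lam j) * lam (m - j)
      = algebraMap ℚ H (Coalgebra.counit (R := ℚ) (lam m)) := by
    intro m
    have h1 := HopfAlgebra.mul_antipode_rTensor_comul_apply (R := ℚ) (lam m)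
    rw [hΔ, map_sum, map_sum] at h1
    simpa [LinearMap.rTensor_tmul, LinearMap.mul'_apply] using h1
  have hS0 : S (lam 0) = 1 := by
    have h := hconv 0
    simp only [zero_add, Finset.sum_range_one, Nat.sub_self, hlam0, mul_one,
      Bialgebra.counit_one, map_one] at h
    rw [hlam0]
    exact h
  have hconv' : ∀ m : ℕ, 1 ≤ m →
      ∑ j ∈ Finset.range (m+1), S (lam j) * lam (m - j) = 0 := by
    intro m hm
    rw [hconv, hcounit m hm, map_zero]
  -- Step 3: the explicit candidate for the antipode values
  set u : ℕ → H := fun m => ∑ d ∈ Finset.range (m+1),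
      ((-1 : ℚ)^d) • compSum lam m d with hu_def
  have hu0 : u 0 = 1 := by
    simp only [hu_def, zero_add, Finset.sum_range_one, pow_zero, one_smul]
    exact compSum_zero_zero lam
  have huconv : ∀ m : ℕ, 1 ≤ m →
      ∑ j ∈ Finset.range (m+1), u j * lam (m - j) = 0 := by
    intro m hm
    have hstep : ∀ j ∈ Finset.range (m+1), u j * lam (m - j)
        = ∑ d ∈ Finset.range (m+1), ((-1:ℚ)^d) • (compSum lam j d * lam (m - j)) := by
      intro j hj
      simp only [mem_range] at hj
      simp only [hu_def]
      rw [Finset.sum_mul,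
        Finset.sum_subset (Finset.range_subset_range.mpr (by omega : j + 1 ≤ m + 1))
          (fun d hd hdn => by
            simp only [mem_range] at hd hdn
            rw [compSum_of_lt lam (by omega), smul_zero, zero_mul])]
      exact Finset.sum_congr rfl fun d _ => smul_mul_assoc _ _ _
    rw [Finset.sum_congr rfl hstep, Finset.sum_comm]
    have hinner : ∀ d ∈ Finset.range (m+1),
        ∑ j ∈ Finset.range (m+1), ((-1:ℚ)^d) • (compSum lam j d * lam (m - j))
        = ((-1:ℚ)^d) • (compSum lam m (d+1) + compSum lam m d) := by
      intro d _
      rw [← Finset.smul_sum]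
      congr 1
      rw [Finset.sum_range_succ, Nat.sub_self, hlam0, mul_one,
        ← comp_rec lam (by omega : 0 < m) d]
    rw [Finset.sum_congr rfl hinner]
    simp only [smul_add]
    rw [Finset.sum_add_distrib]
    have hA1 : ∑ d ∈ Finset.range (m+1), ((-1:ℚ)^d) • compSum lam m (d+1)
        = ∑ d ∈ Finset.range m, ((-1:ℚ)^d) • compSum lam m (d+1) := by
      rw [Finset.sum_range_succ, compSum_of_lt lam (by omega), smul_zero, add_zero]
    have hA2 : ∑ d ∈ Finset.range (m+1), ((-1:ℚ)^d) • compSum lam m d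
        = - ∑ d ∈ Finset.range m, ((-1:ℚ)^d) • compSum lam m (d+1) := by
      rw [Finset.sum_range_succ', compSum_zero_left lam (by omega), smul_zero, add_zero]
      rw [← Finset.sum_neg_distrib]
      refine Finset.sum_congr rfl fun d _ => ?_
      rw [pow_succ', mul_smul, neg_one_smul]
    rw [hA1, hA2]
    exact add_neg_cancel _
  -- Step 4: uniqueness — the antipode values equal the candidate
  have hs : ∀ m : ℕ, S (lam m) = u m := by
    intro m
    induction m using Nat.strong_induction_on with
    | _ m ih =>
      rcases Nat.eq_zero_or_pos m with rfl | hm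
      · rw [hS0, hu0]
      · have h1 := hconv' m hm
        have h2 := huconv m hm
        rw [Finset.sum_range_succ, Nat.sub_self, hlam0, mul_one] at h1 h2
        have h3 : ∑ j ∈ Finset.range m, S (lam j) * lam (m - j)
            = ∑ j ∈ Finset.range m, u j * lam (m - j) :=
          Finset.sum_congr rfl fun j hj => by
            simp only [mem_range] at hj
            rw [ih j hj]
        rw [h3] at h1
        have := h1.trans h2.symm
        exact add_left_cancel this
  -- Step 5: compute D (lam n)
  have hDval : D (lam n) = ∑ j ∈ Finset.range (n+1),
      (((n - j : ℕ) : ℚ)) • (S (lam j) * lam (n - j)) := by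
    rw [hD, hΔ, map_sum, map_sum]
    refine Finset.sum_congr rfl fun j hj => ?_
    rw [TensorProduct.map_tmul, hY, TensorProduct.tmul_smul, LinearMap.map_smul,
      LinearMap.mul'_apply]
  rw [hDval, Finset.sum_range_succ]
  simp only [Nat.sub_self, Nat.cast_zero, zero_smul, add_zero]
  have hstep2 : ∀ j ∈ Finset.range n, (((n - j : ℕ) : ℚ)) • (S (lam j) * lam (n - j))
      = ∑ d ∈ Finset.range n,
          ((-1:ℚ)^d) • ((((n - j : ℕ) : ℚ)) • (compSum lam j d * lam (n - j))) := by
    intro j hj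
    simp only [mem_range] at hj
    rw [hs j]
    simp only [hu_def]
    rw [Finset.sum_mul,
      Finset.sum_subset (Finset.range_subset_range.mpr (by omega : j + 1 ≤ n))
        (fun d hd hdn => by
          simp only [mem_range] at hd hdn
          rw [compSum_of_lt lam (by omega), smul_zero, zero_mul]),
      Finset.smul_sum]
    refine Finset.sum_congr rfl fun d _ => ?_
    rw [smul_mul_assoc, smul_comm]
  rw [Finset.sum_congr rfl hstep2, Finset.sum_comm]
  have hinner2 : ∀ d ∈ Finset.range n,
      ∑ j ∈ Finset.range n,
          ((-1:ℚ)^d) • ((((n - j : ℕ) : ℚ)) • (compSum lam j d * lam (n - j)))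
      = (((-1:ℚ)^d * ((n : ℚ) / (d+1)))) • compSum lam n (d+1) := by
    intro d _
    rw [← Finset.smul_sum, ← weighted_rec lam (fun mm => (mm : ℚ)) (by omega : 0 < n) d]
    have hrot := rot_total lam (n := n) (d := d+1) (Nat.succ_pos d)
    have hne : ((d : ℚ) + 1) ≠ 0 := by positivity
    have hV : ∑ c ∈ Finset.univ.filter (fun c : Composition n => c.length = d + 1),
        ((lastB c : ℚ)) • (c.blocks.map lam).prod
        = (((n : ℚ) / (d+1))) • compSum lam n (d+1) := by
      have hcast : (((d+1 : ℕ)) : ℚ) = (d : ℚ) + 1 := by push_cast; ring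
      rw [hcast] at hrot
      calc ∑ c ∈ Finset.univ.filter (fun c : Composition n => c.length = d + 1),
              ((lastB c : ℚ)) • (c.blocks.map lam).prod
          = ((d : ℚ) + 1)⁻¹ • (((d : ℚ) + 1) •
            ∑ c ∈ Finset.univ.filter (fun c : Composition n => c.length = d + 1),
              ((lastB c : ℚ)) • (c.blocks.map lam).prod) := by
            rw [smul_smul, inv_mul_cancel₀ hne, one_smul]
        _ = ((d : ℚ) + 1)⁻¹ • ((n : ℚ) • compSum lam n (d+1)) := by rw [hrot]
        _ = (((n : ℚ) / (d+1))) • compSum lam n (d+1) := by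
            rw [smul_smul, div_eq_inv_mul]
    rw [hV, smul_smul]
  rw [Finset.sum_congr rfl hinner2]
  -- Step 6: match with the right-hand side
  rw [Finset.smul_sum]
  rw [show Finset.Icc 1 n = Finset.Ico 1 (n+1) from (Finset.Ico_add_one_right_eq_Icc ..).symm,
    Finset.sum_Ico_eq_sum_range]
  simp only [Nat.add_sub_cancel]
  refine Finset.sum_congr rfl fun i hi => ?_
  simp only [mem_range] at hi
  rw [show 1 + i = i + 1 from add_comm 1 i, smul_smul]
  congr 1
  have hpow : ((-1 : ℚ))^(i+1+1) = (-1)^i := by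
    rw [pow_succ, pow_succ]; ring
  rw [hpow]
  have hne : ((i : ℚ) + 1) ≠ 0 := by positivity
  push_cast
  field_simp
end

section
/- Let ℌ = ℚ⟨x,y⟩ and define for n ≥ 1 the derivation ∂_n on ℌ (with respect to concatenation) by ∂_n(x) = x(x+y)^{n-1}y and ∂_n(y) = -x(x+y)^{n-1}y. In ℌ[[u]], exp(Σ_{n≥1} (2^n - 1)·(∂_n(x)/n)·u^n) = x + x·u·(1-(x+2y)u)^{-1}·y, where the exponential is interpreted as: the ℚ[[u]]-algebra map Δ_{-2u}∘Δ_{-u}^{-1} applied to x, using the identity Δ_u = exp(Σ_{n≥1} (-1)^n (∂_n/n) u^n). Concretely: applying the operator exponential exp(Σ_{n≥1} (2^n-1)(∂_n/n)u^n) to x yields x + Σ_{n≥1} x(x+2y)^{n-1}y·u^n. -/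
open Finset PowerSeries

/-- The letter `x` in `ℌ = ℚ⟨x,y⟩`. -/
noncomputable def Hx : FreeAlgebra ℚ (Fin 2) := FreeAlgebra.ι ℚ 0

/-- The letter `y` in `ℌ = ℚ⟨x,y⟩`. -/
noncomputable def Hy : FreeAlgebra ℚ (Fin 2) := FreeAlgebra.ι ℚ 1

namespace ExpAux

abbrev H : Type := FreeAlgebra ℚ (Fin 2)
abbrev A : Type := PowerSeries H

/-- scalar coefficients -/
def a (m : ℕ) : ℚ := (2 ^ m - 1) / m

@[simp] lemma a_zero : a 0 = 0 := by simp [a]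

lemma a_cast (m : ℕ) (hm : 1 ≤ m) : (m : ℚ) * a m = 2 ^ m - 1 := by
  have : (m : ℚ) ≠ 0 := by positivity
  rw [a]
  field_simp

noncomputable def z : H := Hx + Hy

section D

variable (d : ℕ → Module.End ℚ H)

/-- the operator `∑ₘ aₘ ∂ₘ uᵐ` on `ℌ⟦u⟧`. -/
noncomputable def D : A →ₗ[ℚ] A where
  toFun f := PowerSeries.mk fun n => ∑ p ∈ antidiagonal n, a p.1 • d p.1 (coeff p.2 f)
  map_add' f g := by
    ext n
    simp [coeff_mk, map_add, smul_add, Finset.sum_add_distrib]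
  map_smul' q f := by
    ext n
    simp only [coeff_mk, RingHom.id_apply, PowerSeries.coeff_smul, Finset.smul_sum]
    refine Finset.sum_congr rfl fun p _ => ?_
    rw [map_smul, smul_comm]

lemma coeff_D (f : A) (n : ℕ) :
    coeff n (D d f) = ∑ p ∈ antidiagonal n, a p.1 • d p.1 (coeff p.2 f) := by
  simp only [D, LinearMap.coe_mk, AddHom.coe_mk]
  rw [coeff_mk]

end D

end ExpAux

-- rearrangement lemmas for nested antidiagonal sums
lemma sum_ad_left {M : Type*} [AddCommMonoid M] (n : ℕ) (F : ℕ → ℕ → ℕ → M) :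
    ∑ p ∈ antidiagonal n, ∑ q ∈ antidiagonal p.2, F p.1 q.1 q.2
      = ∑ p ∈ antidiagonal n, ∑ q ∈ antidiagonal p.1, F q.1 q.2 p.2 := by
  simp only [Finset.sum_sigma']
  apply Finset.sum_nbij' (fun ⟨⟨m, l⟩, ⟨i, j⟩⟩ => ⟨(m + i, j), (m, i)⟩)
    (fun ⟨⟨s, j⟩, ⟨m, i⟩⟩ => ⟨(m, i + j), (i, j)⟩) <;>
    aesop (add simp [add_assoc])

lemma sum_ad_right {M : Type*} [AddCommMonoid M] (n : ℕ) (F : ℕ → ℕ → ℕ → M) :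
    ∑ p ∈ antidiagonal n, ∑ q ∈ antidiagonal p.2, F p.1 q.1 q.2
      = ∑ p ∈ antidiagonal n, ∑ q ∈ antidiagonal p.2, F q.1 p.1 q.2 := by
  simp only [Finset.sum_sigma']
  apply Finset.sum_nbij' (fun ⟨⟨m, l⟩, ⟨i, j⟩⟩ => ⟨(i, m + j), (m, j)⟩)
    (fun ⟨⟨i, s⟩, ⟨m, j⟩⟩ => ⟨(m, i + j), (i, j)⟩) <;>
    aesop (add simp [add_assoc]) <;> omega
namespace ExpAux
section D
variable (d : ℕ → Module.End ℚ H)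
set_option linter.unusedSectionVars false
variable (hLeib : ∀ n : ℕ, ∀ v w : H, d n (v * w) = d n v * w + v * d n w)

include hLeib in
lemma d_one (m : ℕ) : d m (1 : H) = 0 := by
  have h := hLeib m 1 1
  simp only [one_mul, mul_one] at h
  exact (left_eq_add.mp h)

include hLeib in
lemma D_leibniz (f g : A) : D d (f * g) = D d f * g + f * D d g := by
  ext n
  rw [map_add, coeff_D, coeff_mul, coeff_mul]
  have h1 : ∑ p ∈ antidiagonal n, a p.1 • d p.1 (coeff p.2 (f * g))
      = ∑ p ∈ antidiagonal n, ∑ q ∈ antidiagonal p.2,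
          (a p.1 • (d p.1 (coeff q.1 f) * coeff q.2 g)
            + a p.1 • (coeff q.1 f * d p.1 (coeff q.2 g))) := by
    refine Finset.sum_congr rfl fun p _ => ?_
    rw [coeff_mul, map_sum, Finset.smul_sum]
    refine Finset.sum_congr rfl fun q _ => ?_
    rw [hLeib, smul_add]
  rw [h1]
  simp only [Finset.sum_add_distrib]
  congr 1
  · rw [sum_ad_left n (fun m i j => a m • (d m (coeff i f) * coeff j g))]
    refine Finset.sum_congr rfl fun p _ => ?_
    rw [coeff_D, Finset.sum_mul]
    refine Finset.sum_congr rfl fun q _ => ?_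
    rw [smul_mul_assoc]
  · rw [sum_ad_right n (fun m i j => a m • (coeff i f * d m (coeff j g)))]
    refine Finset.sum_congr rfl fun p _ => ?_
    rw [coeff_D, Finset.mul_sum]
    refine Finset.sum_congr rfl fun q _ => ?_
    rw [mul_smul_comm]

end D
end ExpAux
namespace ExpAux

noncomputable def gs : A := PowerSeries.mk fun m => a m • ((z ^ (m - 1)) * Hy)
noncomputable def hs : A := PowerSeries.mk fun m => a m • (z ^ m)

@[simp] lemma coeff_gs (m : ℕ) : coeff m gs = a m • ((z ^ (m - 1)) * Hy) := coeff_mk _ _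
@[simp] lemma coeff_hs (m : ℕ) : coeff m hs = a m • (z ^ m) := coeff_mk _ _

@[simp] lemma constantCoeff_gs : constantCoeff gs = 0 := by
  rw [gs, constantCoeff_mk, a_zero, zero_smul]

@[simp] lemma constantCoeff_hs : constantCoeff hs = 0 := by
  rw [hs, constantCoeff_mk, a_zero, zero_smul]

section D
variable (d : ℕ → Module.End ℚ H)
set_option linter.unusedSectionVars false
variable (hLeib : ∀ n : ℕ, ∀ v w : H, d n (v * w) = d n v * w + v * d n w)
variable (hdx : ∀ n : ℕ, 1 ≤ n → d n Hx = Hx * (Hx + Hy) ^ (n - 1) * Hy)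
variable (hdy : ∀ n : ℕ, 1 ≤ n → d n Hy = -(Hx * (Hx + Hy) ^ (n - 1) * Hy))

@[simp] lemma z_def : z = Hx + Hy := rfl

include hLeib hdx hdy in
lemma d_z (m : ℕ) (hm : 1 ≤ m) : d m z = 0 := by
  rw [z_def, map_add, hdx m hm, hdy m hm, add_neg_cancel]

include hLeib hdx hdy in
lemma d_z_pow (m : ℕ) (hm : 1 ≤ m) (j : ℕ) : d m (z ^ j) = 0 := by
  induction j with
  | zero => simpa using d_one d hLeib m
  | succ j ih => rw [pow_succ, hLeib, ih, d_z d hLeib hdx hdy m hm, zero_mul, mul_zero, add_zero]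

include hLeib hdx hdy in
lemma D_hs : D d hs = 0 := by
  ext n
  rw [coeff_D, map_zero]
  refine Finset.sum_eq_zero fun p hp => ?_
  rcases Nat.eq_zero_or_pos p.1 with h0 | h1
  · rw [h0, a_zero, zero_smul]
  · rw [coeff_hs, map_smul, d_z_pow d hLeib hdx hdy p.1 h1, smul_zero, smul_zero]

include hLeib in
lemma D_one : D d (1 : A) = 0 := by
  ext n
  rw [coeff_D, map_zero]
  refine Finset.sum_eq_zero fun p hp => ?_
  rw [PowerSeries.coeff_one]
  split
  · rw [d_one d hLeib, smul_zero]
  · rw [map_zero, smul_zero]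

include hLeib hdx hdy in
lemma D_neg_hs_pow (i : ℕ) : D d ((-hs) ^ i) = 0 := by
  induction i with
  | zero => simpa using D_one d hLeib
  | succ i ih =>
      rw [pow_succ, D_leibniz d hLeib, ih, zero_mul, zero_add, map_neg,
        D_hs d hLeib hdx hdy, neg_zero, mul_zero]

include hLeib hdx hdy in
lemma D_C : D d (C Hx) = C Hx * gs := by
  ext n
  have L : coeff n (D d (C Hx)) = a n • d n Hx := by
    rw [coeff_D, Finset.sum_eq_single (n, 0)]
    · simp
    · intro p hp hne
      have h2 : p.2 ≠ 0 := fun h => hne (by rw [HasAntidiagonal.mem_antidiagonal] at hp; cases p; simp_all)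
      simp [PowerSeries.coeff_C, h2]
    · intro h; exact absurd (by simp) h
  have R : coeff n (C Hx * gs) = Hx * (a n • (z ^ (n - 1) * Hy)) := by
    rw [coeff_mul, Finset.sum_eq_single (0, n)]
    · simp
    · intro p hp hne
      have h1 : p.1 ≠ 0 := fun h => hne (by rw [HasAntidiagonal.mem_antidiagonal] at hp; cases p; simp_all)
      simp [PowerSeries.coeff_C, h1]
    · intro h; exact absurd (by simp) h
  rw [L, R]
  rcases Nat.eq_zero_or_pos n with h0 | h1
  · simp [h0]
  · rw [hdx n h1, mul_smul_comm, mul_assoc, z_def]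

include hLeib hdx hdy in
lemma D_gs : D d gs = (gs - hs) * gs := by
  ext n
  have R : coeff n ((gs - hs) * gs)
      = ∑ p ∈ antidiagonal n, coeff p.2 (gs - hs) * coeff p.1 gs := by
    rw [coeff_mul]
    exact (Finset.Nat.sum_antidiagonal_swap
      (f := fun p => coeff p.1 (gs - hs) * coeff p.2 gs)).symm
  rw [coeff_D, R]
  refine Finset.sum_congr rfl fun p hp => ?_
  rcases Nat.eq_zero_or_pos p.1 with h0 | h1
  · simp [coeff_gs, h0]
  rcases Nat.eq_zero_or_pos p.2 with h0 | h2
  · simp [h0]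
  rw [coeff_gs, map_smul, hLeib, d_z_pow d hLeib hdx hdy p.1 h1, zero_mul, zero_add,
    hdy p.1 h1, smul_smul, mul_comm (a p.1)]
  have hr : coeff p.2 (gs - hs) * coeff p.1 gs
      = (a p.2 * a p.1) • ((z ^ (p.2 - 1) * Hy - z ^ p.2) * (z ^ (p.1 - 1) * Hy)) := by
    rw [map_sub, coeff_gs, coeff_hs, coeff_gs, ← smul_sub, smul_mul_smul_comm]
  rw [hr]
  congr 1
  have e : z ^ p.2 = z ^ (p.2 - 1) * z := by
    conv_lhs => rw [show p.2 = (p.2 - 1) + 1 by omega, pow_succ]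
  rw [e, z_def]
  noncomm_ring

end D
end ExpAux
namespace ExpAux
section D
set_option linter.unusedSectionVars false
variable (d : ℕ → Module.End ℚ H)
variable (hLeib : ∀ n : ℕ, ∀ v w : H, d n (v * w) = d n v * w + v * d n w)
variable (hdx : ∀ n : ℕ, 1 ≤ n → d n Hx = Hx * (Hx + Hy) ^ (n - 1) * Hy)
variable (hdy : ∀ n : ℕ, 1 ≤ n → d n Hy = -(Hx * (Hx + Hy) ^ (n - 1) * Hy))

/-- `P k` with `D^k(C x) = C x * P k`. -/
noncomputable def P : ℕ → A
  | 0 => 1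
  | k + 1 => gs * P k + D d (P k)

/-- iterated `D` applied to the constant series `x`. -/
noncomputable def Dk : ℕ → A
  | 0 => C Hx
  | k + 1 => D d (Dk k)

include hLeib hdx hdy in
lemma Dk_eq (k : ℕ) : Dk d k = C Hx * P d k := by
  induction k with
  | zero => simp [Dk, P]
  | succ k ih =>
      rw [Dk, ih, D_leibniz d hLeib, D_C d hLeib hdx hdy, P, mul_add, mul_assoc]

lemma coeff_P_eq_zero : ∀ k n, n < k → coeff n (P d k) = 0 := by
  intro k
  induction k with
  | zero => omega
  | succ k ih =>
      intro n hn
      rw [P, map_add, coeff_mul, coeff_D]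
      rw [Finset.sum_eq_zero fun p hp => ?_, Finset.sum_eq_zero fun p hp => ?_, add_zero]
      · rw [HasAntidiagonal.mem_antidiagonal] at hp
        rcases Nat.eq_zero_or_pos p.1 with h0 | h1
        · rw [h0, a_zero, zero_smul]
        · rw [ih p.2 (by omega), map_zero, smul_zero]
      · rw [HasAntidiagonal.mem_antidiagonal] at hp
        rcases Nat.eq_zero_or_pos p.1 with h0 | h1
        · rw [h0, coeff_gs]
          simp
        · rw [ih p.2 (by omega), mul_zero]

include hLeib hdx hdy in
lemma P_formula (k : ℕ) :
    P d (k + 1) = ∑ i ∈ range (k + 1),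
      (((k + 1).choose (i + 1) : ℚ)) • ((-hs) ^ i * (gs * P d (k - i))) := by
  induction k with
  | zero => simp [P, D_one d hLeib]
  | succ k ih =>
      have hD : ∀ j, D d (P d j) = P d (j + 1) - gs * P d j := fun j => by rw [P]; abel
      have step : ∀ i ∈ range (k + 1),
          D d ((((k + 1).choose (i + 1) : ℚ)) • ((-hs) ^ i * (gs * P d (k - i))))
            = (((k + 1).choose (i + 1) : ℚ)) • ((-hs) ^ (i + 1) * (gs * P d (k - i)))
              + (((k + 1).choose (i + 1) : ℚ)) • ((-hs) ^ i * (gs * P d (k + 1 - i))) := by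
        intro i hi
        rw [mem_range] at hi
        rw [map_smul, D_leibniz d hLeib, D_neg_hs_pow d hLeib hdx hdy, zero_mul, zero_add,
          D_leibniz d hLeib, D_gs d hLeib hdx hdy, hD (k - i),
          show k - i + 1 = k + 1 - i by omega, ← smul_add]
        congr 1
        rw [pow_succ]
        noncomm_ring
      rw [P, ih, map_sum, Finset.sum_congr rfl step, Finset.sum_add_distrib]
      have pascal : ∀ i : ℕ, (((k + 2).choose (i + 1) : ℚ))
          = ((k + 1).choose i : ℚ) + ((k + 1).choose (i + 1) : ℚ) := by
        intro i
        rw [← Nat.cast_add, Nat.choose_succ_succ (k + 1) i]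
      have split : ∑ i ∈ range (k + 1 + 1),
            (((k + 1 + 1).choose (i + 1) : ℚ)) • ((-hs) ^ i * (gs * P d (k + 1 - i)))
          = (∑ i ∈ range (k + 2),
              (((k + 1).choose i : ℚ)) • ((-hs) ^ i * (gs * P d (k + 1 - i))))
            + ∑ i ∈ range (k + 2),
              (((k + 1).choose (i + 1) : ℚ)) • ((-hs) ^ i * (gs * P d (k + 1 - i))) := by
        rw [← Finset.sum_add_distrib]
        refine Finset.sum_congr rfl fun i hi => ?_
        rw [show k + 1 + 1 = k + 2 from rfl, pascal, add_smul]
      have partA : ∑ i ∈ range (k + 2),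
            (((k + 1).choose i : ℚ)) • ((-hs) ^ i * (gs * P d (k + 1 - i)))
          = (∑ i ∈ range (k + 1),
              (((k + 1).choose (i + 1) : ℚ)) • ((-hs) ^ (i + 1) * (gs * P d (k - i))))
            + gs * P d (k + 1) := by
        rw [Finset.sum_range_succ']
        simp only [Nat.choose_zero_right, Nat.cast_one, one_smul, pow_zero, one_mul,
          Nat.sub_zero, Nat.succ_sub_succ]
      have partB : ∑ i ∈ range (k + 2),
            (((k + 1).choose (i + 1) : ℚ)) • ((-hs) ^ i * (gs * P d (k + 1 - i)))
          = ∑ i ∈ range (k + 1),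
            (((k + 1).choose (i + 1) : ℚ)) • ((-hs) ^ i * (gs * P d (k + 1 - i))) := by
        rw [Finset.sum_range_succ, Nat.choose_succ_self, Nat.cast_zero, zero_smul, add_zero]
      rw [split, partA, partB, ih]
      abel

end D
end ExpAux
namespace ExpAux

lemma coeff_pow_lt_eq_zero {R : Type*} [Semiring R] (f : PowerSeries R)
    (hf : constantCoeff f = 0) (i n : ℕ) (h : n < i) : coeff n (f ^ i) = 0 := by
  induction i generalizing n with
  | zero => omega
  | succ i ih =>
      rw [pow_succ, coeff_mul]
      refine Finset.sum_eq_zero fun p hp => ?_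
      rw [HasAntidiagonal.mem_antidiagonal] at hp
      rcases Nat.eq_zero_or_pos p.2 with h0 | h1
      · rw [h0, coeff_zero_eq_constantCoeff_apply, hf, mul_zero]
      · rw [ih p.1 (by omega), zero_mul]

/-- the scalar series `H(w) = ∑ (2^m-1)/m wᵐ`. -/
noncomputable def Hq : PowerSeries ℚ := PowerSeries.mk a

@[simp] lemma coeff_Hq (m : ℕ) : PowerSeries.coeff m Hq = a m := coeff_mk _ _

@[simp] lemma constantCoeff_Hq : constantCoeff Hq = 0 := by
  rw [Hq, constantCoeff_mk, a_zero]

@[simp] lemma constantCoeff_negHq : constantCoeff (-Hq) = 0 := by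
  rw [map_neg, constantCoeff_Hq, neg_zero]

/-- truncated exponential `∑_{i<N} (-H)^i/i!`. -/
noncomputable def Eq' (N : ℕ) : PowerSeries ℚ :=
  ∑ i ∈ range N, ((i.factorial : ℚ))⁻¹ • (-Hq) ^ i

lemma coeff_Eq'_stable {n N M : ℕ} (hN : n < N) (hM : n < M) :
    PowerSeries.coeff n (Eq' N) = PowerSeries.coeff n (Eq' M) := by
  have key : ∀ K, n < K → PowerSeries.coeff n (Eq' K)
      = ∑ i ∈ range (n + 1), ((i.factorial : ℚ))⁻¹ • PowerSeries.coeff n ((-Hq) ^ i) := by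
    intro K hK
    rw [Eq', map_sum]
    simp_rw [PowerSeries.coeff_smul]
    refine (Finset.sum_subset (by intro i hi; rw [mem_range] at *; omega) ?_).symm
    intro i hi hni
    rw [mem_range] at hi hni
    rw [coeff_pow_lt_eq_zero _ constantCoeff_negHq i n (by omega), smul_zero]
  rw [key N hN, key M hM]

lemma coeff_Eq'_zero (N : ℕ) (hN : 1 ≤ N) : PowerSeries.coeff 0 (Eq' N) = 1 := by
  rw [Eq', map_sum]
  rw [Finset.sum_eq_single 0]
  · simp
  · intro i hi hne
    rw [PowerSeries.coeff_smul, coeff_pow_lt_eq_zero _ constantCoeff_negHq i 0 (by omega),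
      smul_zero]
  · intro h; exact absurd (by rw [mem_range]; omega) h

lemma deriv_Eq' (N : ℕ) :
    d⁄dX ℚ (Eq' (N + 1)) = -(d⁄dX ℚ Hq * Eq' N) := by
  rw [Eq', map_sum, Finset.sum_range_succ']
  simp only [Derivation.leibniz_pow, Derivation.map_smul, map_neg, zero_smul, smul_zero,
    add_zero]
  rw [Eq', Finset.mul_sum, ← Finset.sum_neg_distrib]
  refine Finset.sum_congr rfl fun i hi => ?_
  have hfac : (((i + 1).factorial : ℚ))⁻¹ * ((i : ℚ) + 1) = ((i.factorial : ℚ))⁻¹ := by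
    rw [Nat.factorial_succ]
    push_cast
    have h1 : (i.factorial : ℚ) ≠ 0 := by positivity
    have h2 : ((i : ℚ) + 1) ≠ 0 := by positivity
    field_simp
  have hfacC : PowerSeries.C (((i + 1).factorial : ℚ))⁻¹ * (((i : ℚ) + 1) • (1 : PowerSeries ℚ))
      = PowerSeries.C ((i.factorial : ℚ))⁻¹ := by
    rw [PowerSeries.smul_eq_C_mul, mul_one, ← map_mul, hfac]
  simp only [smul_eq_mul, nsmul_eq_mul, PowerSeries.smul_eq_C_mul, Nat.succ_sub_one]
  have hcast : ((i + 1 : ℕ) : PowerSeries ℚ) = ((i : ℚ) + 1) • (1 : PowerSeries ℚ) := by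
    rw [PowerSeries.smul_eq_C_mul, mul_one]
    push_cast
    simp [map_add, map_one, map_natCast]
  rw [hcast]
  linear_combination (-((-Hq) ^ i * d⁄dX ℚ Hq)) * hfacC

end ExpAux
namespace ExpAux

lemma geom_sum_aux : ∀ n : ℕ, ∑ i ∈ range n, ((2:ℚ) ^ (i+1) - 1) = 2 ^ (n+1) - 2 - n := by
  intro n
  induction n with
  | zero => simp
  | succ n ih =>
      rw [Finset.sum_range_succ, ih]
      push_cast
      ring

lemma coeff_dHq (q : ℕ) : PowerSeries.coeff q (d⁄dX ℚ Hq) = (2:ℚ) ^ (q+1) - 1 := by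
  rw [PowerSeries.coeff_derivative, coeff_Hq]
  rw [show ((q:ℚ) + 1) = ((q + 1 : ℕ) : ℚ) by push_cast; ring, mul_comm]
  exact a_cast (q+1) (by omega)

lemma coeff_Eq'_neg_one : ∀ n, 1 ≤ n → ∀ N, n < N → PowerSeries.coeff n (Eq' N) = -1 := by
  intro n
  induction n using Nat.strong_induction_on with
  | _ n IH =>
  intro hn N hN
  rw [coeff_Eq'_stable hN (Nat.lt_succ_self n)]
  obtain ⟨m, rfl⟩ : ∃ m, n = m + 1 := ⟨n - 1, by omega⟩
  have hc := congrArg (PowerSeries.coeff m) (deriv_Eq' (m + 1))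
  rw [PowerSeries.coeff_derivative] at hc
  have hrhs : PowerSeries.coeff m (-(d⁄dX ℚ Hq * Eq' (m + 1))) = -((m:ℚ) + 1) := by
    rw [map_neg, coeff_mul, Finset.Nat.sum_antidiagonal_eq_sum_range_succ_mk]
    rw [Finset.sum_range_succ, Nat.sub_self, coeff_Eq'_zero (m+1) (by omega), coeff_dHq,
      mul_one]
    have hsmall : ∀ i ∈ range m,
        PowerSeries.coeff i (d⁄dX ℚ Hq) * PowerSeries.coeff (m - i) (Eq' (m + 1))
          = -((2:ℚ) ^ (i+1) - 1) := by
      intro i hi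
      rw [mem_range] at hi
      rw [coeff_dHq, IH (m - i) (by omega) (by omega) (m+1) (by omega)]
      ring
    rw [Finset.sum_congr rfl hsmall, Finset.sum_neg_distrib, geom_sum_aux]
    push_cast
    ring
  rw [hrhs] at hc
  have hm : ((m:ℚ) + 1) ≠ 0 := by positivity
  exact mul_right_cancel₀ hm (by rw [hc]; ring)

end ExpAux
namespace ExpAux

lemma coeff_neg_hs_pow (i p : ℕ) :
    coeff p ((-hs) ^ i) = (PowerSeries.coeff p ((-Hq) ^ i)) • z ^ p := by
  induction i generalizing p with
  | zero =>
      rw [pow_zero, pow_zero, PowerSeries.coeff_one, PowerSeries.coeff_one]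
      split
      · next h => subst h; rw [pow_zero, one_smul]
      · rw [zero_smul]
  | succ i ih =>
      rw [pow_succ, pow_succ, coeff_mul, coeff_mul, Finset.sum_smul]
      refine Finset.sum_congr rfl fun q hq => ?_
      rw [HasAntidiagonal.mem_antidiagonal] at hq
      rw [ih, map_neg, map_neg, coeff_hs, coeff_Hq]
      have hzz : z ^ q.1 * z ^ q.2 = z ^ p := by rw [← pow_add, hq]
      rw [mul_neg, smul_mul_smul_comm, hzz, mul_neg, neg_smul]

/-- `Φ N = ∑_{i ≤ N} (-h)^i/(i+1)!` in `ℌ⟦u⟧`. -/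
noncomputable def Phi (N : ℕ) : A :=
  ∑ i ∈ range (N + 1), (((i + 1).factorial : ℚ))⁻¹ • (-hs) ^ i

noncomputable def Phiq (N : ℕ) : PowerSeries ℚ :=
  ∑ i ∈ range (N + 1), (((i + 1).factorial : ℚ))⁻¹ • (-Hq) ^ i

lemma coeff_Phi (N p : ℕ) :
    coeff p (Phi N) = (PowerSeries.coeff p (Phiq N)) • z ^ p := by
  rw [Phi, Phiq, map_sum, map_sum, Finset.sum_smul]
  refine Finset.sum_congr rfl fun i hi => ?_
  rw [PowerSeries.coeff_smul, PowerSeries.coeff_smul, coeff_neg_hs_pow, smul_smul, smul_eq_mul]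

lemma Phiq_mul_Hq (N : ℕ) : Phiq N * Hq = 1 - Eq' (N + 2) := by
  rw [Eq', Finset.sum_range_succ', Phiq, Finset.sum_mul]
  have e1 : ∀ i ∈ range (N + 1),
      ((((i + 1).factorial : ℚ))⁻¹ • (-Hq) ^ i) * Hq
        = -((((i + 1).factorial : ℚ))⁻¹ • (-Hq) ^ (i + 1)) := by
    intro i hi
    rw [smul_mul_assoc, ← smul_neg]
    congr 1
    rw [pow_succ]
    ring
  rw [Finset.sum_congr rfl e1, Finset.sum_neg_distrib]
  simp only [Nat.factorial_zero, Nat.cast_one, inv_one, one_smul, pow_zero]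
  abel

lemma coeff_Phiq_mul_Hq (N n : ℕ) (h1 : 1 ≤ n) (h2 : n ≤ N + 1) :
    PowerSeries.coeff n (Phiq N * Hq) = 1 := by
  rw [Phiq_mul_Hq, map_sub, PowerSeries.coeff_one, if_neg (by omega),
    coeff_Eq'_neg_one n h1 (N + 2) (by omega)]
  ring

lemma coeff_Phi_mul_gs (N n : ℕ) (h1 : 1 ≤ n) (h2 : n ≤ N + 1) :
    coeff n (Phi N * gs) = z ^ (n - 1) * Hy := by
  rw [coeff_mul]
  have e1 : ∀ p ∈ antidiagonal n,
      coeff p.1 (Phi N) * coeff p.2 gs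
        = (PowerSeries.coeff p.1 (Phiq N) * a p.2) • (z ^ (n - 1) * Hy) := by
    intro p hp
    rw [HasAntidiagonal.mem_antidiagonal] at hp
    rw [coeff_Phi, coeff_gs]
    rcases Nat.eq_zero_or_pos p.2 with h0 | hpos
    · rw [h0, a_zero, zero_smul, mul_zero, mul_zero, zero_smul]
    · rw [smul_mul_smul_comm, ← mul_assoc, ← pow_add,
        show p.1 + (p.2 - 1) = n - 1 by omega]
  rw [Finset.sum_congr rfl e1, ← Finset.sum_smul]
  have : ∑ p ∈ antidiagonal n, PowerSeries.coeff p.1 (Phiq N) * a p.2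
      = PowerSeries.coeff n (Phiq N * Hq) := by
    rw [coeff_mul]
    exact Finset.sum_congr rfl fun p hp => by rw [coeff_Hq]
  rw [this, coeff_Phiq_mul_Hq N n h1 h2, one_smul]

lemma constantCoeff_Phi_mul_gs (N : ℕ) : coeff 0 (Phi N * gs) = 0 := by
  rw [coeff_mul]
  simp [coeff_gs]

end ExpAux
namespace ExpAux

lemma fact_choose (k i : ℕ) (h : i ≤ k) :
    (((k+1).factorial : ℚ))⁻¹ * (((k+1).choose (i+1) : ℕ) : ℚ)
      = (((i+1).factorial : ℚ))⁻¹ * (((k-i).factorial : ℚ))⁻¹ := by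
  have key := Nat.choose_mul_factorial_mul_factorial (Nat.succ_le_succ h)
  rw [Nat.succ_sub_succ] at key
  have h1 : ((i+1).factorial : ℚ) ≠ 0 := by positivity
  have h2 : (((k-i)).factorial : ℚ) ≠ 0 := by positivity
  have h3 : ((k+1).factorial : ℚ) ≠ 0 := by positivity
  field_simp
  rw [← key]
  push_cast
  ring

lemma tri_reindex {M : Type*} [AddCommMonoid M] (N : ℕ) (f : ℕ → ℕ → M) :
    ∑ k ∈ range (N+1), ∑ i ∈ range (k+1), f i (k - i)
      = ∑ p ∈ (range (N+1) ×ˢ range (N+1)).filter (fun p => p.1 + p.2 ≤ N), f p.1 p.2 := by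
  rw [Finset.sum_sigma']
  apply Finset.sum_nbij' (fun x => (x.2, x.1 - x.2)) (fun p => ⟨p.1 + p.2, p.1⟩) <;>
    simp only [Finset.mem_sigma, Finset.mem_filter, Finset.mem_product, mem_range] <;>
    intros <;> first
      | trivial
      | omega
      | (congr 1 <;> omega)
      | (simp_all; omega)
      | (apply Sigma.ext <;> simp_all <;> omega)

section D
set_option linter.unusedSectionVars false
variable (d : ℕ → Module.End ℚ H)
variable (hLeib : ∀ n : ℕ, ∀ v w : H, d n (v * w) = d n v * w + v * d n w)
variable (hdx : ∀ n : ℕ, 1 ≤ n → d n Hx = Hx * (Hx + Hy) ^ (n - 1) * Hy)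
variable (hdy : ∀ n : ℕ, 1 ≤ n → d n Hy = -(Hx * (Hx + Hy) ^ (n - 1) * Hy))

lemma P_zero : P d 0 = 1 := rfl

noncomputable def Rr (N : ℕ) : A := ∑ k ∈ range (N+1), ((k.factorial : ℚ))⁻¹ • P d k

include hLeib hdx hdy in
lemma Rr_succ (N : ℕ) : Rr d (N+1)
    = 1 + ∑ p ∈ (range (N+1) ×ˢ range (N+1)).filter (fun p => p.1 + p.2 ≤ N),
        ((((p.1+1).factorial : ℚ))⁻¹ * ((p.2.factorial : ℚ))⁻¹) •
          ((-hs) ^ p.1 * (gs * P d p.2)) := by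
  rw [Rr, Finset.sum_range_succ', P_zero]
  simp only [Nat.factorial_zero, Nat.cast_one, inv_one, one_smul, smul_eq_mul]
  rw [add_comm]
  congr 1
  have e1 : ∀ k ∈ range (N+1), (((k+1).factorial : ℚ))⁻¹ • P d (k+1)
      = ∑ i ∈ range (k+1), ((((i+1).factorial : ℚ))⁻¹ * (((k-i).factorial : ℚ))⁻¹) •
          ((-hs) ^ i * (gs * P d (k-i))) := by
    intro k hk
    rw [P_formula d hLeib hdx hdy k, Finset.smul_sum]
    refine Finset.sum_congr rfl fun i hi => ?_
    rw [mem_range] at hi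
    rw [smul_smul, fact_choose k i (by omega)]
  rw [Finset.sum_congr rfl e1,
    tri_reindex N (fun i j => ((((i+1).factorial : ℚ))⁻¹ * ((j.factorial : ℚ))⁻¹) •
      ((-hs) ^ i * (gs * P d j)))]

lemma sq_expand (N : ℕ) : Phi N * (gs * Rr d N)
    = ∑ p ∈ range (N+1) ×ˢ range (N+1),
        ((((p.1+1).factorial : ℚ))⁻¹ * ((p.2.factorial : ℚ))⁻¹) •
          ((-hs) ^ p.1 * (gs * P d p.2)) := by
  rw [Finset.sum_product, Phi, Rr, Finset.mul_sum, Finset.sum_mul]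
  refine Finset.sum_congr rfl fun i hi => ?_
  rw [Finset.mul_sum]
  refine Finset.sum_congr rfl fun j hj => ?_
  rw [mul_smul_comm ((j.factorial : ℚ))⁻¹ gs (P d j), smul_mul_smul_comm]

lemma ord3 (i j n : ℕ) (h : n < i + 1 + j) : coeff n ((-hs) ^ i * (gs * P d j)) = 0 := by
  rw [coeff_mul]
  refine Finset.sum_eq_zero fun p hp => ?_
  rw [HasAntidiagonal.mem_antidiagonal] at hp
  by_cases h1 : p.1 < i
  · rw [coeff_pow_lt_eq_zero _ (by simp) i p.1 h1, zero_mul]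
  · rw [coeff_mul, Finset.sum_eq_zero, mul_zero]
    intro q hq
    rw [HasAntidiagonal.mem_antidiagonal] at hq
    rcases Nat.eq_zero_or_pos q.1 with h0 | hq1
    · rw [h0, coeff_gs]
      simp
    · rw [coeff_P_eq_zero d j q.2 (by omega), mul_zero]

include hLeib hdx hdy in
lemma key18 (N n : ℕ) (hn : n ≤ N + 1) :
    coeff n (Rr d (N+1)) = coeff n (1 + Phi N * (gs * Rr d N)) := by
  rw [Rr_succ d hLeib hdx hdy N, sq_expand d N, map_add, map_add]
  congr 1
  rw [map_sum, map_sum,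
    ← Finset.sum_filter_add_sum_filter_not (range (N+1) ×ˢ range (N+1))
      (fun p => p.1 + p.2 ≤ N)]
  rw [Finset.sum_eq_zero (s := (range (N+1) ×ˢ range (N+1)).filter
      (fun p => ¬ p.1 + p.2 ≤ N)) ?_, add_zero]
  intro p hp
  rw [mem_filter] at hp
  rw [PowerSeries.coeff_smul, ord3 d p.1 p.2 n (by omega), smul_zero]

end D
end ExpAux
namespace ExpAux
section D
set_option linter.unusedSectionVars false
variable (d : ℕ → Module.End ℚ H)
variable (hLeib : ∀ n : ℕ, ∀ v w : H, d n (v * w) = d n v * w + v * d n w)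
variable (hdx : ∀ n : ℕ, 1 ≤ n → d n Hx = Hx * (Hx + Hy) ^ (n - 1) * Hy)
variable (hdy : ∀ n : ℕ, 1 ≤ n → d n Hy = -(Hx * (Hx + Hy) ^ (n - 1) * Hy))

/-- the full series `exp(D)(x) / x`, assembled coefficientwise. -/
noncomputable def W : A :=
  PowerSeries.mk fun n => ∑ k ∈ range (n+1), ((k.factorial : ℚ))⁻¹ • coeff n (P d k)

lemma coeff_W_eq_Rr (N n : ℕ) (h : n ≤ N) : coeff n (W d) = coeff n (Rr d N) := by
  rw [W, coeff_mk, Rr, map_sum]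
  simp_rw [PowerSeries.coeff_smul]
  refine Finset.sum_subset (by intro k hk; rw [mem_range] at *; omega) ?_
  intro k hk hnk
  rw [mem_range] at hk hnk
  rw [coeff_P_eq_zero d k n (by omega), smul_zero]

lemma coeff_W_zero : coeff 0 (W d) = 1 := by
  rw [W, coeff_mk]
  simp [P_zero]

include hLeib hdx hdy in
lemma W_rec (n : ℕ) (hn : 1 ≤ n) :
    coeff n (W d) = ∑ i ∈ range n, z ^ i * (Hy * coeff (n - 1 - i) (W d)) := by
  obtain ⟨m, rfl⟩ : ∃ m, n = m + 1 := ⟨n - 1, by omega⟩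
  rw [coeff_W_eq_Rr d (m+1) (m+1) le_rfl, key18 d hLeib hdx hdy m (m+1) le_rfl,
    map_add, PowerSeries.coeff_one, if_neg (by omega), zero_add, ← mul_assoc, coeff_mul,
    Finset.Nat.sum_antidiagonal_eq_sum_range_succ_mk, Finset.sum_range_succ']
  have h0 : coeff 0 (Phi m * gs) * coeff (m + 1 - 0) (Rr d m) = 0 := by
    rw [constantCoeff_Phi_mul_gs, zero_mul]
  rw [h0, add_zero]
  refine Finset.sum_congr rfl fun i hi => ?_
  rw [mem_range] at hi
  rw [coeff_Phi_mul_gs m (i+1) (by omega) (by omega),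
    ← coeff_W_eq_Rr d m (m + 1 - (i+1)) (by omega),
    show m + 1 - (i+1) = m + 1 - 1 - i by omega, Nat.succ_sub_one, mul_assoc]

include hLeib hdx hdy in
lemma coeff_W (n : ℕ) (hn : 1 ≤ n) :
    coeff n (W d) = (Hx + 2 * Hy) ^ (n - 1) * Hy := by
  induction n using Nat.strong_induction_on with
  | _ n IH =>
  obtain ⟨m, rfl⟩ : ∃ m, n = m + 1 := ⟨n - 1, by omega⟩
  rw [W_rec d hLeib hdx hdy (m+1) (by omega)]
  rcases Nat.eq_zero_or_pos m with rfl | hm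
  · simp [coeff_W_zero]
  obtain ⟨l, rfl⟩ : ∃ l, m = l + 1 := ⟨m - 1, by omega⟩
  rw [Finset.sum_range_succ' (fun i => z ^ i * (Hy * coeff (l + 1 + 1 - 1 - i) (W d))) (l+1)]
  have e1 : ∀ i ∈ range (l+1),
      z ^ (i+1) * (Hy * coeff (l + 1 + 1 - 1 - (i+1)) (W d))
        = z * (z ^ i * (Hy * coeff (l + 1 - 1 - i) (W d))) := by
    intro i hi
    rw [show l + 1 + 1 - 1 - (i+1) = l + 1 - 1 - i by omega, pow_succ', mul_assoc]
  rw [Finset.sum_congr rfl e1, ← Finset.mul_sum,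
    ← W_rec d hLeib hdx hdy (l+1) (by omega)]
  simp only [pow_zero, one_mul, Nat.sub_zero, Nat.succ_sub_one]
  rw [IH (l+1) (by omega) (by omega), pow_succ', show z = Hx + Hy from rfl]
  noncomm_ring

end D
end ExpAux
namespace ExpAux

/-- lists of positive integers summing to `n` (blocks of compositions). -/
noncomputable def Fn (n : ℕ) : Finset (List ℕ) :=
  (Finset.univ : Finset (Composition n)).image Composition.blocks

lemma mem_Fn {n : ℕ} {L : List ℕ} :
    L ∈ Fn n ↔ (∀ i ∈ L, 0 < i) ∧ L.sum = n := by
  constructor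
  · rintro h
    rw [Fn, Finset.mem_image] at h
    obtain ⟨c, -, rfl⟩ := h
    exact ⟨fun i hi => c.blocks_pos hi, c.blocks_sum⟩
  · rintro ⟨h1, h2⟩
    rw [Fn, Finset.mem_image]
    exact ⟨⟨L, fun hi => h1 _ hi, h2⟩, Finset.mem_univ _, rfl⟩

lemma len_le_sum : ∀ L : List ℕ, (∀ i ∈ L, 0 < i) → L.length ≤ L.sum := by
  intro L
  induction L with
  | nil => simp
  | cons h t ih =>
      intro hpos
      rw [List.length_cons, List.sum_cons]
      have := ih (fun i hi => hpos i (List.mem_cons_of_mem h hi))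
      have hh := hpos h (List.mem_cons_self)
      omega

section D
set_option linter.unusedSectionVars false
variable (d : ℕ → Module.End ℚ H)
variable (hLeib : ∀ n : ℕ, ∀ v w : H, d n (v * w) = d n v * w + v * d n w)
variable (hdx : ∀ n : ℕ, 1 ≤ n → d n Hx = Hx * (Hx + Hy) ^ (n - 1) * Hy)
variable (hdy : ∀ n : ℕ, 1 ≤ n → d n Hy = -(Hx * (Hx + Hy) ^ (n - 1) * Hy))

/-- the iterated operator applied to `x` along a list of indices. -/
noncomputable def F (L : List ℕ) : H := (L.map (fun m => a m • d m)).prod Hx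

lemma F_nil : F d [] = Hx := by simp [F]

lemma F_cons (m : ℕ) (L : List ℕ) : F d (m :: L) = a m • d m (F d L) := by
  rw [F, F, List.map_cons, List.prod_cons, Module.End.mul_apply, LinearMap.smul_apply]

lemma coeff_Dk : ∀ k n : ℕ, coeff n (Dk d k)
    = ∑ L ∈ (Fn n).filter (fun L => L.length = k), F d L := by
  intro k
  induction k with
  | zero =>
      intro n
      rw [Dk, PowerSeries.coeff_C]
      rcases Nat.eq_zero_or_pos n with rfl | hn
      · have : (Fn 0).filter (fun L => L.length = 0) = {([] : List ℕ)} := by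
          ext L
          simp only [Finset.mem_filter, Finset.mem_singleton, mem_Fn, List.length_eq_zero_iff]
          constructor
          · rintro ⟨-, h⟩; exact h
          · rintro rfl; simp
        rw [this, Finset.sum_singleton, F_nil, if_pos rfl]
      · have : (Fn n).filter (fun L => L.length = 0) = ∅ := by
          ext L
          simp only [Finset.mem_filter, Finset.notMem_empty, iff_false, not_and, mem_Fn,
            List.length_eq_zero_iff]
          rintro ⟨h1, h2⟩ rfl
          simp at h2
          omega
        rw [this, Finset.sum_empty, if_neg (by omega)]
  | succ k ih =>
      intro n
      rw [Dk, coeff_D]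
      have e1 : ∀ p ∈ antidiagonal n, a p.1 • d p.1 (coeff p.2 (Dk d k))
          = ∑ L ∈ (Fn p.2).filter (fun L => L.length = k), a p.1 • d p.1 (F d L) := by
        intro p hp
        rw [ih p.2, map_sum, Finset.smul_sum]
      rw [Finset.sum_congr rfl e1]
      have hfil := Finset.sum_filter_of_ne (s := antidiagonal n)
        (p := fun p : ℕ × ℕ => 1 ≤ p.1)
        (f := fun p : ℕ × ℕ =>
          ∑ L ∈ (Fn p.2).filter (fun L => L.length = k), a p.1 • d p.1 (F d L))
        (fun p hp hne => by
          by_contra hlt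
          apply hne
          refine Finset.sum_eq_zero fun L hL => ?_
          rw [show p.1 = 0 by omega, a_zero, zero_smul])
      rw [← hfil]
      rw [Finset.sum_sigma']
      apply Finset.sum_nbij' (i := fun x => x.1.1 :: x.2)
        (j := fun L => ⟨(L.headI, L.tail.sum), L.tail⟩)
      · rintro ⟨⟨m, l⟩, L⟩ hx
        simp only [Finset.mem_sigma, Finset.mem_filter, HasAntidiagonal.mem_antidiagonal, mem_Fn] at hx ⊢
        obtain ⟨⟨hml, hm⟩, ⟨hpos, hsum⟩, hlen⟩ := hx
        refine ⟨⟨?_, ?_⟩, ?_⟩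
        · intro i hi
          rcases List.mem_cons.1 hi with rfl | hi
          · omega
          · exact hpos i hi
        · rw [List.sum_cons]; omega
        · rw [List.length_cons]; omega
      · rintro L hL
        simp only [Finset.mem_sigma, Finset.mem_filter, HasAntidiagonal.mem_antidiagonal, mem_Fn] at hL ⊢
        obtain ⟨⟨hpos, hsum⟩, hlen⟩ := hL
        have hne : L ≠ [] := by
          intro h; rw [h] at hlen; simp at hlen
        obtain ⟨h0, T, rfl⟩ : ∃ h0 T, L = h0 :: T :=
          ⟨L.headI, L.tail, (List.cons_head!_tail hne).symm⟩
        simp only [List.headI_cons, List.tail_cons, List.sum_cons, List.length_cons] at *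
        refine ⟨⟨by omega, hpos h0 List.mem_cons_self⟩,
          ⟨fun i hi => hpos i (List.mem_cons_of_mem _ hi), trivial⟩, by omega⟩
      · rintro ⟨⟨m, l⟩, L⟩ hx
        simp only [Finset.mem_sigma, Finset.mem_filter, HasAntidiagonal.mem_antidiagonal, mem_Fn] at hx
        obtain ⟨⟨hml, hm⟩, ⟨hpos, hsum⟩, hlen⟩ := hx
        simp only [List.headI_cons, List.tail_cons]
        congr 1
        rw [hsum]
      · rintro L hL
        simp only [Finset.mem_filter, mem_Fn] at hL
        obtain ⟨⟨hpos, hsum⟩, hlen⟩ := hL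
        have hne : L ≠ [] := by
          intro h; rw [h] at hlen; simp at hlen
        exact List.cons_head!_tail hne
      · rintro ⟨⟨m, l⟩, L⟩ hx
        rw [F_cons]

lemma coeff_C_mul' (r : H) (f : A) (n : ℕ) : coeff n (C r * f) = r * coeff n f := by
  rw [coeff_mul, Finset.sum_eq_single (0, n)]
  · simp
  · intro b hb hne
    have h1 : b.1 ≠ 0 := fun h => hne (by rw [HasAntidiagonal.mem_antidiagonal] at hb; cases b; simp_all)
    simp [PowerSeries.coeff_C, h1]
  · intro h; exact absurd (by simp) h

end D
end ExpAux
/-- **Exponential of the weighted derivations applied to `x`.**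
Let `∂ₙ` be the derivations on `ℌ = ℚ⟨x,y⟩` with `∂ₙ(x) = x(x+y)^{n-1}y` and
`∂ₙ(y) = -x(x+y)^{n-1}y`.  Then applying the operator exponential
`exp(∑_{n≥1} (2ⁿ-1)(∂ₙ/n)uⁿ)` to `x` yields `x + ∑_{n≥1} x(x+2y)^{n-1}y·uⁿ`;
concretely, for `n ≥ 1` the coefficient of `uⁿ`, which is the sum over all
compositions `(m₁,…,m_k)` of `n` of
`(1/k!)·((2^{m₁}-1)/m₁)⋯((2^{m_k}-1)/m_k)·(∂_{m₁}∘⋯∘∂_{m_k})(x)`,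
equals `x(x+2y)^{n-1}y`. -/
theorem exp_weighted_derivations_on_x
    (d : ℕ → Module.End ℚ (FreeAlgebra ℚ (Fin 2)))
    (hLeib : ∀ n : ℕ, ∀ v w : FreeAlgebra ℚ (Fin 2),
      d n (v * w) = d n v * w + v * d n w)
    (hdx : ∀ n : ℕ, 1 ≤ n → d n Hx = Hx * (Hx + Hy) ^ (n - 1) * Hy)
    (hdy : ∀ n : ℕ, 1 ≤ n → d n Hy = -(Hx * (Hx + Hy) ^ (n - 1) * Hy))
    (n : ℕ) (hn : 1 ≤ n) :
    ∑ c : Composition n,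
        (((c.length.factorial : ℚ))⁻¹ : ℚ) •
          ((c.blocks.map (fun m : ℕ => ((2 ^ m - 1 : ℚ) / (m : ℚ)) • d m)).prod Hx)
      = Hx * (Hx + 2 * Hy) ^ (n - 1) * Hy := by
  classical
  have hinj : ∀ c ∈ (Finset.univ : Finset (Composition n)), ∀ c' ∈ Finset.univ,
      c.blocks = c'.blocks → c = c' := fun c _ c' _ h => Composition.ext h
  have step1 : ∑ c : Composition n,
        (((c.length.factorial : ℚ))⁻¹ : ℚ) •
          ((c.blocks.map (fun m : ℕ => ((2 ^ m - 1 : ℚ) / (m : ℚ)) • d m)).prod Hx)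
      = ∑ L ∈ ExpAux.Fn n, ((L.length.factorial : ℚ))⁻¹ • ExpAux.F d L := by
    rw [ExpAux.Fn, Finset.sum_image hinj]
    rfl
  rw [step1]
  have hmaps : ∀ L ∈ ExpAux.Fn n, L.length ∈ Finset.range (n+1) := by
    intro L hL
    rw [ExpAux.mem_Fn] at hL
    rw [Finset.mem_range]
    have := ExpAux.len_le_sum L hL.1
    omega
  rw [← Finset.sum_fiberwise_of_maps_to hmaps
    (fun L => ((L.length.factorial : ℚ))⁻¹ • ExpAux.F d L)]
  have step3 : ∀ k ∈ Finset.range (n+1),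
      ∑ L ∈ (ExpAux.Fn n).filter (fun L => L.length = k),
          ((L.length.factorial : ℚ))⁻¹ • ExpAux.F d L
        = (k.factorial : ℚ)⁻¹ • (Hx * coeff n (ExpAux.P d k)) := by
    intro k hk
    have e : ∀ L ∈ (ExpAux.Fn n).filter (fun L => L.length = k),
        ((L.length.factorial : ℚ))⁻¹ • ExpAux.F d L = (k.factorial : ℚ)⁻¹ • ExpAux.F d L := by
      intro L hL
      rw [Finset.mem_filter] at hL
      rw [hL.2]
    rw [Finset.sum_congr rfl e, ← Finset.smul_sum, ← ExpAux.coeff_Dk d k n,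
      ExpAux.Dk_eq d hLeib hdx hdy k, ExpAux.coeff_C_mul']
  rw [Finset.sum_congr rfl step3]
  have step4 : ∑ k ∈ Finset.range (n+1),
        (k.factorial : ℚ)⁻¹ • (Hx * coeff n (ExpAux.P d k))
      = Hx * ∑ k ∈ Finset.range (n+1), (k.factorial : ℚ)⁻¹ • coeff n (ExpAux.P d k) := by
    rw [Finset.mul_sum]
    exact Finset.sum_congr rfl fun k _ => (mul_smul_comm _ _ _).symm
  have step5 : ∑ k ∈ Finset.range (n+1), (k.factorial : ℚ)⁻¹ • coeff n (ExpAux.P d k)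
      = coeff n (ExpAux.W d) := by
    rw [ExpAux.W, coeff_mk]
  rw [step4, step5, ExpAux.coeff_W d hLeib hdx hdy n hn, ← mul_assoc]
end
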